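/- Quasi-Pythagoras inequality: let a be a symmetric bilinear form with continuity constant C_cont and coercivity constant C_coer relative to a norm ‖·‖, and suppose a(e_*, W) = 0 for all W in a subspace containing E⁰. Write e_* + E⁰ = e − E⊥ with E⁰ = E − E⊥ where E = e − e_*. Then for every δ > 0: a(e_*, e_*) ≤ (1+δ) a(e,e) − (C_coer/2)‖E‖² + C₅(1 + 1/δ)‖E⊥‖², where C₅ = max(C_coer + C_cont, C_cont²/C_coer). -/

import Mathlib

/-- Quasi-Pythagoras inequality for the inconsistent Nitsche method. -/
theorem stmt_13 {H : Type*} [NormedAddCommGroup H] [NormedSpace ℝ H]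
    (a : LinearMap.BilinForm ℝ H) (hsymm : ∀ v w, a v w = a w v)
    (Ccont Ccoer C₅ : ℝ) (hCcoer : 0 < Ccoer) (hCcont : Ccoer ≤ Ccont)
    (hcont : ∀ v w : H, |a v w| ≤ Ccont * ‖v‖ * ‖w‖)
    (hcoer : ∀ v : H, Ccoer * ‖v‖ ^ 2 ≤ a v v)
    (hC₅ : C₅ = max (Ccoer + Ccont) (Ccont ^ 2 / Ccoer))
    (X0 : Submodule ℝ H)
    (u U Ustar E E0 Ep : H)
    (hE : E = (u - U) - (u - Ustar)) (hE0 : E0 = E - Ep) (hE0mem : E0 ∈ X0)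
    (hgal : ∀ W ∈ X0, a (u - Ustar) W = 0) :
    ∀ δ > 0, a (u - Ustar) (u - Ustar) ≤
      (1 + δ) * a (u - U) (u - U) - (Ccoer / 2) * ‖E‖ ^ 2
        + C₅ * (1 + 1 / δ) * ‖Ep‖ ^ 2 := by
  intro δ hδ
  set e := u - U with he
  set es := u - Ustar with hes
  -- key identity: es + E0 = e - Ep
  have hsum : es + E0 = e - Ep := by
    rw [hE0, hE]; abel
  have horth : a es E0 = 0 := hgal E0 hE0mem
  -- expand a (es + E0) (es + E0) = a (e - Ep) (e - Ep)
  have hexp : a es es + a E0 E0 = a e e - 2 * a e Ep + a Ep Ep := by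
    have h1 : a (es + E0) (es + E0) = a (e - Ep) (e - Ep) := by rw [hsum]
    have h2 : a (es + E0) (es + E0)
        = a es es + a es E0 + a E0 es + a E0 E0 := by
      simp [map_add, LinearMap.add_apply]; ring
    have h3 : a (e - Ep) (e - Ep) = a e e - a e Ep - a Ep e + a Ep Ep := by
      simp [map_sub, LinearMap.sub_apply]; ring
    have h4 : a E0 es = 0 := by rw [hsymm]; exact horth
    have h5 : a Ep e = a e Ep := hsymm Ep e
    rw [h2, h3, horth, h4, h5] at h1
    linarith
  -- norm decomposition: ‖E‖² ≤ 2‖E0‖² + 2‖Ep‖²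
  have hEnorm : ‖E‖ ^ 2 ≤ 2 * ‖E0‖ ^ 2 + 2 * ‖Ep‖ ^ 2 := by
    have h1 : ‖E‖ ≤ ‖E0‖ + ‖Ep‖ := by
      have : E = E0 + Ep := by rw [hE0]; abel
      rw [this]; exact norm_add_le _ _
    nlinarith [norm_nonneg E, norm_nonneg E0, norm_nonneg Ep,
      sq_nonneg (‖E0‖ - ‖Ep‖), sq_nonneg (‖E0‖ + ‖Ep‖)]
  -- bounds
  have hcoerE0 : Ccoer * ‖E0‖ ^ 2 ≤ a E0 E0 := hcoer E0
  have hcoere : Ccoer * ‖e‖ ^ 2 ≤ a e e := hcoer e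
  have hcontEp : a Ep Ep ≤ Ccont * ‖Ep‖ ^ 2 := by
    have := hcont Ep Ep
    have h := abs_le.mp this
    nlinarith [h.2]
  have hconteEp : |a e Ep| ≤ Ccont * ‖e‖ * ‖Ep‖ := hcont e Ep
  have hC5a : Ccoer + Ccont ≤ C₅ := hC₅ ▸ le_max_left _ _
  have hC5b : Ccont ^ 2 ≤ C₅ * Ccoer := by
    have : Ccont ^ 2 / Ccoer ≤ C₅ := hC₅ ▸ le_max_right _ _
    exact (div_le_iff₀ hCcoer).mp this
  -- Young's inequality step:
  have hyoung : -(2 * a e Ep) ≤ δ * (Ccoer * ‖e‖ ^ 2) + C₅ / δ * ‖Ep‖ ^ 2 := by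
    have habs : -(a e Ep) ≤ Ccont * ‖e‖ * ‖Ep‖ := by
      have := abs_le.mp hconteEp; linarith [this.1]
    have key : 2 * (Ccont * ‖e‖ * ‖Ep‖) ≤ δ * (Ccoer * ‖e‖ ^ 2) + C₅ / δ * ‖Ep‖ ^ 2 := by
      have hpos : (0:ℝ) < δ * Ccoer := mul_pos hδ hCcoer
      rw [← mul_le_mul_iff_of_pos_right hpos]
      have hd : C₅ / δ * ‖Ep‖ ^ 2 * (δ * Ccoer) = C₅ * Ccoer * ‖Ep‖ ^ 2 := by
        field_simp
      rw [add_mul, hd]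
      nlinarith [sq_nonneg (δ * Ccoer * ‖e‖ - Ccont * ‖Ep‖), sq_nonneg ‖Ep‖]
    linarith
  have hδA : δ * (Ccoer * ‖e‖ ^ 2) ≤ δ * a e e :=
    mul_le_mul_of_nonneg_left hcoere hδ.le
  have hC5coef : Ccont + Ccoer + C₅ / δ ≤ C₅ * (1 + 1 / δ) := by
    have h : C₅ * (1 + 1 / δ) = C₅ + C₅ / δ := by field_simp
    linarith [h ▸ le_refl (C₅ * (1 + 1 / δ))]
  have hEp2 : (0:ℝ) ≤ ‖Ep‖ ^ 2 := sq_nonneg _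
  have hmul1 := mul_le_mul_of_nonneg_right hC5coef hEp2
  have hmul2 := mul_le_mul_of_nonneg_left hEnorm hCcoer.le
  linarith [hexp, hcoerE0, hyoung, hδA, hcontEp, hmul1, hmul2]
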